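/- arXiv:2210.07399 — 3 statements merged into one kernel-verified Lean document; each statement's English description precedes it below -/
import Mathlib

section
/- Let n ≥ 2. The expected grid length of a uniformly random grid diagram of size n equals 2n(n+1)/3. In particular the expected ratio length/(grid number) equals 2(n+1)/3, a linear function of n with slope 2/3 ≈ 0.6667. -/
/-- The finite set of grid diagrams of size `n`: collision-free pairs of permutations. -/
def grids (n : ℕ) : Finset (Equiv.Perm (Fin n) × Equiv.Perm (Fin n)) :=
  Finset.univ.filter fun p => ∀ i, p.1 i ≠ p.2 i

/-- The grid length of the grid diagram `(σ, τ)`: the sum of the lengths of the horizontal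
segments `|σ i − τ i|` and of the vertical segments `|σ⁻¹ j − τ⁻¹ j|`. -/
def gridLength {n : ℕ} (σ τ : Equiv.Perm (Fin n)) : ℤ :=
  (∑ i : Fin n, |((σ i : ℕ) : ℤ) - ((τ i : ℕ) : ℤ)|) +
  (∑ j : Fin n, |((σ⁻¹ j : ℕ) : ℤ) - ((τ⁻¹ j : ℕ) : ℤ)|)

private lemma gauss (k : ℕ) : 2 * ∑ a ∈ Finset.range k, (a : ℤ) = k^2 - k := by
  induction k with
  | zero => simp
  | succ m ih =>
    rw [Finset.sum_range_succ]
    push_cast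
    push_cast at ih
    ring_nf
    ring_nf at ih
    linarith

private lemma sum_abs_range (m : ℕ) :
    3 * ∑ a ∈ Finset.range m, ∑ b ∈ Finset.range m, |(a : ℤ) - b| = m^3 - m := by
  induction m with
  | zero => simp
  | succ k ih =>
    have key : ∑ a ∈ Finset.range k, |(a : ℤ) - k| = k^2 - ∑ a ∈ Finset.range k, (a : ℤ) := by
      have h : ∀ a ∈ Finset.range k, |(a : ℤ) - k| = (k : ℤ) - a := by
        intro a ha
        have : (a : ℤ) < k := by exact_mod_cast Finset.mem_range.mp ha
        rw [abs_of_nonpos (by linarith)]; ring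
      rw [Finset.sum_congr rfl h, Finset.sum_sub_distrib, Finset.sum_const, Finset.card_range]
      ring
    have key2 : ∑ b ∈ Finset.range k, |(k : ℤ) - b| = ∑ a ∈ Finset.range k, |(a : ℤ) - k| := by
      exact Finset.sum_congr rfl fun a _ => abs_sub_comm _ _
    have g := gauss k
    simp only [Finset.sum_range_succ, Finset.sum_add_distrib]
    rw [key2, key, sub_self, abs_zero]
    push_cast at ih g ⊢
    ring_nf
    ring_nf at ih g
    linarith

private lemma exists_perm_two {n : ℕ} {a b c d : Fin n} (hab : a ≠ b) (hcd : c ≠ d) :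
    ∃ h : Equiv.Perm (Fin n), h c = a ∧ h d = b := by
  classical
  set s := Equiv.swap c a with hs
  have hsd : s d ≠ a := by
    intro h
    have hsc : s c = a := Equiv.swap_apply_left c a
    exact hcd (s.injective (hsc.trans h.symm))
  refine ⟨s.trans (Equiv.swap (s d) b), ?_, ?_⟩
  · show Equiv.swap (s d) b (s c) = a
    rw [Equiv.swap_apply_left]
    exact Equiv.swap_apply_of_ne_of_ne hsd.symm hab
  · show Equiv.swap (s d) b (s d) = b
    exact Equiv.swap_apply_left _ _

private lemma sum_perm_pair {n : ℕ} (f : Fin n → Fin n → ℤ) {a b c d : Fin n}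
    (hab : a ≠ b) (hcd : c ≠ d) :
    ∑ g : Equiv.Perm (Fin n), f (g a) (g b) = ∑ g : Equiv.Perm (Fin n), f (g c) (g d) := by
  obtain ⟨h, hc, hd⟩ := exists_perm_two hab hcd
  calc ∑ g : Equiv.Perm (Fin n), f (g a) (g b)
      = ∑ g : Equiv.Perm (Fin n), f ((g * h) c) ((g * h) d) := by
        refine Finset.sum_congr rfl fun g _ => ?_
        rw [Equiv.Perm.mul_apply, Equiv.Perm.mul_apply, hc, hd]
    _ = ∑ g : Equiv.Perm (Fin n), f (g c) (g d) :=
        Equiv.sum_comp (Equiv.mulRight h) (fun g => f (g c) (g d))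

private lemma sum_grids_mul {n : ℕ} (g : Equiv.Perm (Fin n))
    (f : Equiv.Perm (Fin n) × Equiv.Perm (Fin n) → ℤ) :
    ∑ p ∈ grids n, f (g * p.1, g * p.2) = ∑ p ∈ grids n, f p := by
  refine Finset.sum_equiv ((Equiv.mulLeft g).prodCongr (Equiv.mulLeft g)) ?_ ?_
  · intro p
    simp only [grids, Finset.mem_filter, Finset.mem_univ, true_and, Equiv.prodCongr_apply,
      Equiv.coe_mulLeft, Prod.map, Equiv.Perm.mul_apply]
    constructor
    · intro h i hgi; exact h i (g.injective hgi)
    · intro h i hi; exact h i (by rw [hi])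
  · intro p _
    rfl

private lemma sum_grids_inv {n : ℕ} (f : Equiv.Perm (Fin n) × Equiv.Perm (Fin n) → ℤ) :
    ∑ p ∈ grids n, f (p.1⁻¹, p.2⁻¹) = ∑ p ∈ grids n, f p := by
  refine Finset.sum_equiv ((Equiv.inv _).prodCongr (Equiv.inv _)) ?_ ?_
  · intro p
    simp only [grids, Finset.mem_filter, Finset.mem_univ, true_and, Equiv.prodCongr_apply,
      Equiv.inv_apply, Prod.map]
    constructor
    · intro h j hj
      apply h (p.1⁻¹ j)
      rw [show ∀ (f : Equiv.Perm (Fin n)) x, f (f⁻¹ x) = x from fun f x => f.apply_symm_apply x, hj, show ∀ (f : Equiv.Perm (Fin n)) x, f (f⁻¹ x) = x from fun f x => f.apply_symm_apply x]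
    · intro h i hi
      apply h (p.1 i)
      rw [show ∀ (f : Equiv.Perm (Fin n)) x, f⁻¹ (f x) = x from fun f x => f.symm_apply_apply x, hi, show ∀ (f : Equiv.Perm (Fin n)) x, f⁻¹ (f x) = x from fun f x => f.symm_apply_apply x]
  · intro p _
    rfl

/-- For `n ≥ 2`, the expected grid length of a uniformly random grid diagram
of size `n` equals `2n(n+1)/3`; in particular the expected ratio length/(grid number) equals
`2(n+1)/3`. (Expectations are stated as sums over all grids against the cardinality of the
set of grids.) -/
theorem expected_grid_length (n : ℕ) (hn : 2 ≤ n) :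
    (∑ p ∈ grids n, (gridLength p.1 p.2 : ℚ)) =
      (2 * n * (n + 1) / 3) * (grids n).card ∧
    (∑ p ∈ grids n, (gridLength p.1 p.2 : ℚ) / n) =
      (2 * (n + 1) / 3) * (grids n).card := by
  classical
  have h0 : 0 < n := by omega
  have h1 : 1 < n := by omega
  set i0 : Fin n := ⟨0, h0⟩ with hi0
  set i1 : Fin n := ⟨1, h1⟩ with hi1
  have h01 : i0 ≠ i1 := by simp [hi0, hi1, Fin.ext_iff]
  set H : ℤ := ∑ p ∈ grids n, ∑ i : Fin n, |((p.1 i : ℕ) : ℤ) - ((p.2 i : ℕ) : ℤ)| with hHdef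
  set E : ℤ := ∑ g : Equiv.Perm (Fin n), |((g i0 : ℕ) : ℤ) - ((g i1 : ℕ) : ℤ)| with hEdef
  set S : ℤ := ∑ a : Fin n, ∑ b : Fin n, |((a : ℕ) : ℤ) - ((b : ℕ) : ℤ)| with hSdef
  -- Step A: the total length is twice the horizontal part
  have hA : (∑ p ∈ grids n, gridLength p.1 p.2) = 2 * H := by
    unfold gridLength
    rw [Finset.sum_add_distrib]
    have h2 : (∑ p ∈ grids n, ∑ j : Fin n, |((p.1⁻¹ j : ℕ) : ℤ) - ((p.2⁻¹ j : ℕ) : ℤ)|) = H := by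
      rw [hHdef]
      exact sum_grids_inv (fun q => ∑ j : Fin n, |((q.1 j : ℕ) : ℤ) - ((q.2 j : ℕ) : ℤ)|)
    rw [h2, ← hHdef]
    ring
  -- Step B : n! * H = card * (n * E)
  have hB : (Nat.factorial n : ℤ) * H = ((grids n).card : ℤ) * ((n : ℤ) * E) := by
    have step1 : ∀ g : Equiv.Perm (Fin n),
        (∑ p ∈ grids n, ∑ i : Fin n, |((g (p.1 i) : ℕ) : ℤ) - ((g (p.2 i) : ℕ) : ℤ)|) = H := by
      intro g
      have := sum_grids_mul g
        (fun p => ∑ i : Fin n, |((p.1 i : ℕ) : ℤ) - ((p.2 i : ℕ) : ℤ)|)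
      simpa [Equiv.Perm.mul_apply] using this
    have t : (∑ g : Equiv.Perm (Fin n),
        ∑ p ∈ grids n, ∑ i : Fin n, |((g (p.1 i) : ℕ) : ℤ) - ((g (p.2 i) : ℕ) : ℤ)|)
        = (Nat.factorial n : ℤ) * H := by
      rw [Finset.sum_congr rfl (fun g _ => step1 g), Finset.sum_const, Finset.card_univ,
        Fintype.card_perm, Fintype.card_fin, nsmul_eq_mul]
    calc (Nat.factorial n : ℤ) * H
        = ∑ g : Equiv.Perm (Fin n), ∑ p ∈ grids n, ∑ i : Fin n,
            |((g (p.1 i) : ℕ) : ℤ) - ((g (p.2 i) : ℕ) : ℤ)| := t.symm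
      _ = ∑ p ∈ grids n, ∑ i : Fin n, ∑ g : Equiv.Perm (Fin n),
            |((g (p.1 i) : ℕ) : ℤ) - ((g (p.2 i) : ℕ) : ℤ)| := by
          rw [Finset.sum_comm]
          exact Finset.sum_congr rfl fun p _ => Finset.sum_comm
      _ = ∑ p ∈ grids n, ∑ _i : Fin n, E := by
          refine Finset.sum_congr rfl fun p hp => Finset.sum_congr rfl fun i _ => ?_
          have hp' : p.1 i ≠ p.2 i := by
            simp only [grids, Finset.mem_filter] at hp
            exact hp.2 i
          rw [hEdef]
          exact sum_perm_pair (fun x y => |((x : ℕ) : ℤ) - ((y : ℕ) : ℤ)|) hp' h01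
      _ = ((grids n).card : ℤ) * ((n : ℤ) * E) := by
          simp [Finset.sum_const, Finset.card_univ, nsmul_eq_mul]
  -- Step C : n * (n * E - E) = n! * S
  have hW : ∀ a b : Fin n, (∑ g : Equiv.Perm (Fin n), |((g a : ℕ) : ℤ) - ((g b : ℕ) : ℤ)|)
      = E - (if a = b then E else 0) := by
    intro a b
    by_cases h : a = b
    · subst h; simp
    · rw [sum_perm_pair (fun x y => |((x : ℕ) : ℤ) - ((y : ℕ) : ℤ)|) h h01, hEdef]
      simp [h]
  have hC : (n : ℤ) * ((n : ℤ) * E - E) = (Nat.factorial n : ℤ) * S := by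
    have lhs_eq : (∑ a : Fin n, ∑ b : Fin n,
        ∑ g : Equiv.Perm (Fin n), |((g a : ℕ) : ℤ) - ((g b : ℕ) : ℤ)|)
        = (n : ℤ) * ((n : ℤ) * E - E) := by
      simp only [hW]
      simp [Finset.sum_sub_distrib, Finset.sum_ite_eq, Finset.sum_const, Finset.card_univ,
        nsmul_eq_mul]
      ring
    have perg : ∀ g : Equiv.Perm (Fin n),
        (∑ a : Fin n, ∑ b : Fin n, |((g a : ℕ) : ℤ) - ((g b : ℕ) : ℤ)|) = S := by
      intro g
      calc ∑ a : Fin n, ∑ b : Fin n, |((g a : ℕ) : ℤ) - ((g b : ℕ) : ℤ)|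
          = ∑ a : Fin n, ∑ b : Fin n, |((g a : ℕ) : ℤ) - ((b : ℕ) : ℤ)| := by
            refine Finset.sum_congr rfl fun a _ => ?_
            exact Equiv.sum_comp g (fun x => |((g a : ℕ) : ℤ) - ((x : ℕ) : ℤ)|)
        _ = S := by
            rw [hSdef]
            exact Equiv.sum_comp g (fun x => ∑ b : Fin n, |((x : ℕ) : ℤ) - ((b : ℕ) : ℤ)|)
    have rhs_eq : (∑ a : Fin n, ∑ b : Fin n,
        ∑ g : Equiv.Perm (Fin n), |((g a : ℕ) : ℤ) - ((g b : ℕ) : ℤ)|)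
        = (Nat.factorial n : ℤ) * S := by
      calc (∑ a : Fin n, ∑ b : Fin n,
            ∑ g : Equiv.Perm (Fin n), |((g a : ℕ) : ℤ) - ((g b : ℕ) : ℤ)|)
          = ∑ a : Fin n, ∑ g : Equiv.Perm (Fin n), ∑ b : Fin n,
              |((g a : ℕ) : ℤ) - ((g b : ℕ) : ℤ)| := by
            exact Finset.sum_congr rfl fun a _ => Finset.sum_comm
        _ = ∑ g : Equiv.Perm (Fin n), ∑ a : Fin n, ∑ b : Fin n,
              |((g a : ℕ) : ℤ) - ((g b : ℕ) : ℤ)| := Finset.sum_comm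
        _ = ∑ _g : Equiv.Perm (Fin n), S := Finset.sum_congr rfl fun g _ => perg g
        _ = (Nat.factorial n : ℤ) * S := by
            rw [Finset.sum_const, Finset.card_univ, Fintype.card_perm, Fintype.card_fin,
              nsmul_eq_mul]
    rw [← lhs_eq, rhs_eq]
  -- Step D : 3 * S = n^3 - n
  have hD : 3 * S = (n : ℤ)^3 - (n : ℤ) := by
    have hS' : S = ∑ a ∈ Finset.range n, ∑ b ∈ Finset.range n, |(a : ℤ) - b| := by
      rw [hSdef,
        Fin.sum_univ_eq_sum_range (fun a : ℕ => ∑ b : Fin n, |(a : ℤ) - ((b : ℕ) : ℤ)|) n]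
      exact Finset.sum_congr rfl fun a _ =>
        Fin.sum_univ_eq_sum_range (fun b : ℕ => |(a : ℤ) - (b : ℤ)|) n
    rw [hS']
    exact sum_abs_range n
  -- deduce 3E = n! (n+1)
  have hn0 : (n : ℤ) ≠ 0 := by positivity
  have hn1 : (n : ℤ) - 1 ≠ 0 := by
    have : (2 : ℤ) ≤ n := by exact_mod_cast hn
    omega
  have hfac : (Nat.factorial n : ℤ) ≠ 0 := by exact_mod_cast (Nat.factorial_ne_zero n)
  have hE3 : 3 * E = (Nat.factorial n : ℤ) * ((n : ℤ) + 1) := by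
    apply mul_left_cancel₀ (mul_ne_zero hn0 hn1)
    linear_combination 3 * hC + (Nat.factorial n : ℤ) * hD
  have hH3 : 3 * H = ((grids n).card : ℤ) * ((n : ℤ) * ((n : ℤ) + 1)) := by
    apply mul_left_cancel₀ hfac
    linear_combination 3 * hB + ((grids n).card : ℤ) * (n : ℤ) * hE3
  have hFinal : 3 * (∑ p ∈ grids n, gridLength p.1 p.2)
      = 2 * (n : ℤ) * ((n : ℤ) + 1) * ((grids n).card : ℤ) := by
    rw [hA]
    linear_combination 2 * hH3
  -- pass to ℚ
  have hcast : (∑ p ∈ grids n, (gridLength p.1 p.2 : ℚ))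
      = (((∑ p ∈ grids n, gridLength p.1 p.2) : ℤ) : ℚ) := by
    push_cast
    rfl
  have hQ : 3 * (∑ p ∈ grids n, (gridLength p.1 p.2 : ℚ))
      = 2 * (n : ℚ) * ((n : ℚ) + 1) * ((grids n).card : ℚ) := by
    rw [hcast]
    exact_mod_cast congrArg (fun z : ℤ => (z : ℚ)) hFinal
  have hnq : (n : ℚ) ≠ 0 := by positivity
  constructor
  · field_simp
    linear_combination hQ
  · rw [← Finset.sum_div]
    field_simp
    linear_combination hQ
end

section
/- Let n ≥ 2. The expected Thurston–Bennequin number of a uniformly random grid diagram of size n equals −n/2. In particular the average Thurston–Bennequin number lies on a line of slope −1/2 as a function of the grid number n. -/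
/-- The set of crossings of the grid diagram `(σ, τ)`. -/
def crossings {n : ℕ} (σ τ : Equiv.Perm (Fin n)) : Finset (Fin n × Fin n) :=
  Finset.univ.filter fun ij =>
    min (σ ij.1) (τ ij.1) < ij.2 ∧ ij.2 < max (σ ij.1) (τ ij.1) ∧
    min (σ⁻¹ ij.2) (τ⁻¹ ij.2) < ij.1 ∧ ij.1 < max (σ⁻¹ ij.2) (τ⁻¹ ij.2)

/-- The sign of the crossing `(i, j)`: `sgn((σ i − τ i) · (τ⁻¹ j − σ⁻¹ j))`. -/
def crossSign {n : ℕ} (σ τ : Equiv.Perm (Fin n)) (i j : Fin n) : ℤ :=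
  Int.sign ((((σ i : ℕ) : ℤ) - ((τ i : ℕ) : ℤ)) * (((τ⁻¹ j : ℕ) : ℤ) - ((σ⁻¹ j : ℕ) : ℤ)))

/-- The writhe of the grid diagram `(σ, τ)`: the sum of the signs of its crossings. -/
def writhe {n : ℕ} (σ τ : Equiv.Perm (Fin n)) : ℤ :=
  ∑ ij ∈ crossings σ τ, crossSign σ τ ij.1 ij.2

/-- The number of cusps (NE or SW corners) located at X-markings. -/
def cuspsX {n : ℕ} (σ τ : Equiv.Perm (Fin n)) : ℕ :=
  (Finset.univ.filter fun i : Fin n =>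
    (τ i < σ i ∧ τ⁻¹ (σ i) < i) ∨ (σ i < τ i ∧ i < τ⁻¹ (σ i))).card

/-- The number of cusps (NE or SW corners) located at O-markings. -/
def cuspsO {n : ℕ} (σ τ : Equiv.Perm (Fin n)) : ℕ :=
  (Finset.univ.filter fun i : Fin n =>
    (σ i < τ i ∧ σ⁻¹ (τ i) < i) ∨ (τ i < σ i ∧ i < σ⁻¹ (τ i))).card

/-- The cusp number `c(G)`: the total number of NE and SW corners of the grid diagram. -/
def cusps {n : ℕ} (σ τ : Equiv.Perm (Fin n)) : ℕ := cuspsX σ τ + cuspsO σ τ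

/-- The Thurston–Bennequin number `tb(G) = w(G) − c(G)/2`. -/
def tb {n : ℕ} (σ τ : Equiv.Perm (Fin n)) : ℚ :=
  (writhe σ τ : ℚ) - (cusps σ τ : ℚ) / 2

/-! ### Auxiliary lemmas for the reflection argument -/

private lemma revp_apply {n : ℕ} (σ : Equiv.Perm (Fin n)) (i : Fin n) :
    ((Fin.revPerm : Equiv.Perm (Fin n)) * σ) i = (σ i).rev := rfl

private lemma revp_inv_apply {n : ℕ} (σ : Equiv.Perm (Fin n)) (j : Fin n) :
    ((Fin.revPerm : Equiv.Perm (Fin n)) * σ)⁻¹ j = σ⁻¹ j.rev := by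
  simp [mul_inv_rev, Equiv.Perm.inv_def]

private lemma rev_lt_iff' {n : ℕ} (a j : Fin n) : a.rev < j ↔ j.rev < a := by
  rw [← Fin.rev_rev j, Fin.rev_lt_rev, Fin.rev_rev]

private lemma lt_rev_iff' {n : ℕ} (a j : Fin n) : j < a.rev ↔ a < j.rev := by
  rw [← Fin.rev_rev j, Fin.rev_lt_rev, Fin.rev_rev]

private lemma rev_cast {n : ℕ} (a : Fin n) : ((a.rev : ℕ) : ℤ) = (n : ℤ) - 1 - (a : ℕ) := by
  have := a.is_lt
  simp only [Fin.val_rev]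
  omega

private lemma mem_crossings_rev {n : ℕ} (σ τ : Equiv.Perm (Fin n)) (i j : Fin n) :
    (i, j) ∈ crossings ((Fin.revPerm : Equiv.Perm (Fin n)) * σ)
      ((Fin.revPerm : Equiv.Perm (Fin n)) * τ) ↔ (i, j.rev) ∈ crossings σ τ := by
  simp only [crossings, Finset.mem_filter, Finset.mem_univ, true_and, revp_apply,
    revp_inv_apply, Fin.rev_rev, min_lt_iff, lt_max_iff, rev_lt_iff', lt_rev_iff']
  tauto

private lemma crossSign_rev {n : ℕ} (σ τ : Equiv.Perm (Fin n)) (i j : Fin n) :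
    crossSign ((Fin.revPerm : Equiv.Perm (Fin n)) * σ)
      ((Fin.revPerm : Equiv.Perm (Fin n)) * τ) i j = - crossSign σ τ i j.rev := by
  simp only [crossSign, revp_apply, revp_inv_apply, Fin.rev_rev, rev_cast]
  rw [← Int.sign_neg]
  ring_nf

private lemma writhe_rev {n : ℕ} (σ τ : Equiv.Perm (Fin n)) :
    writhe ((Fin.revPerm : Equiv.Perm (Fin n)) * σ)
      ((Fin.revPerm : Equiv.Perm (Fin n)) * τ) = - writhe σ τ := by
  unfold writhe
  rw [← Finset.sum_neg_distrib]
  refine Finset.sum_nbij' (fun ij => (ij.1, ij.2.rev)) (fun ij => (ij.1, ij.2.rev)) ?_ ?_ ?_ ?_ ?_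
  · intro ij h
    exact (mem_crossings_rev σ τ ij.1 ij.2).mp (by simpa using h)
  · intro ij h
    exact (mem_crossings_rev σ τ ij.1 ij.2.rev).mpr (by simpa [Fin.rev_rev] using h)
  · intro ij _; simp [Fin.rev_rev]
  · intro ij _; simp [Fin.rev_rev]
  · intro ij _
    exact crossSign_rev σ τ ij.1 ij.2

private lemma cuspsX_rev {n : ℕ} (σ τ : Equiv.Perm (Fin n)) (h : ∀ i, σ i ≠ τ i) :
    cuspsX ((Fin.revPerm : Equiv.Perm (Fin n)) * σ)
      ((Fin.revPerm : Equiv.Perm (Fin n)) * τ) + cuspsX σ τ = n := by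
  unfold cuspsX
  have key : (Finset.univ.filter fun i : Fin n =>
      (((Fin.revPerm : Equiv.Perm (Fin n)) * τ) i < ((Fin.revPerm : Equiv.Perm (Fin n)) * σ) i ∧
        ((Fin.revPerm : Equiv.Perm (Fin n)) * τ)⁻¹ (((Fin.revPerm : Equiv.Perm (Fin n)) * σ) i) < i) ∨
      (((Fin.revPerm : Equiv.Perm (Fin n)) * σ) i < ((Fin.revPerm : Equiv.Perm (Fin n)) * τ) i ∧
        i < ((Fin.revPerm : Equiv.Perm (Fin n)) * τ)⁻¹ (((Fin.revPerm : Equiv.Perm (Fin n)) * σ) i))) =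
      Finset.univ.filter fun i : Fin n =>
      ¬ ((τ i < σ i ∧ τ⁻¹ (σ i) < i) ∨ (σ i < τ i ∧ i < τ⁻¹ (σ i))) := by
    apply Finset.filter_congr
    intro i _
    simp only [revp_apply, revp_inv_apply, Fin.rev_rev, Fin.rev_lt_rev]
    have h1 : σ i ≠ τ i := h i
    have h2 : τ⁻¹ (σ i) ≠ i := by
      intro hc
      exact h1 (by simpa using congrArg τ hc)
    constructor
    · rintro (⟨ha, hb⟩ | ⟨ha, hb⟩) <;>
        rintro (⟨hc, hd⟩ | ⟨hc, hd⟩) <;> first | exact absurd hc (not_lt.mpr ha.le) | omega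
    · intro hc
      rcases lt_or_gt_of_ne h1 with h3 | h3 <;> rcases lt_or_gt_of_ne h2 with h4 | h4 <;> tauto
  rw [key, add_comm,
    Finset.card_filter_add_card_filter_not (fun i =>
      (τ i < σ i ∧ τ⁻¹ (σ i) < i) ∨ (σ i < τ i ∧ i < τ⁻¹ (σ i)))]
  simp

private lemma cuspsO_eq_cuspsX {n : ℕ} (σ τ : Equiv.Perm (Fin n)) :
    cuspsO σ τ = cuspsX τ σ := rfl

private lemma cusps_rev {n : ℕ} (σ τ : Equiv.Perm (Fin n)) (h : ∀ i, σ i ≠ τ i) :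
    cusps ((Fin.revPerm : Equiv.Perm (Fin n)) * σ)
      ((Fin.revPerm : Equiv.Perm (Fin n)) * τ) + cusps σ τ = 2 * n := by
  have h' : ∀ i, τ i ≠ σ i := fun i => (h i).symm
  have h1 := cuspsX_rev σ τ h
  have h2 := cuspsX_rev τ σ h'
  unfold cusps
  rw [cuspsO_eq_cuspsX, cuspsO_eq_cuspsX]
  omega

private lemma revPerm_mul_revPerm_mul {n : ℕ} (σ : Equiv.Perm (Fin n)) :
    (Fin.revPerm : Equiv.Perm (Fin n)) * ((Fin.revPerm : Equiv.Perm (Fin n)) * σ) = σ := by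
  ext i
  simp [Fin.rev_rev]

/-- For `n ≥ 2`, the expected Thurston–Bennequin number of a uniformly
random grid diagram of size `n` equals `−n/2`; in particular the average Thurston–Bennequin
number lies on a line of slope `−1/2` as a function of the grid number `n`. -/
theorem expected_thurston_bennequin (n : ℕ) (hn : 2 ≤ n) :
    ∑ p ∈ grids n, tb p.1 p.2 = -((n : ℚ) / 2) * (grids n).card := by
  set r : Equiv.Perm (Fin n) := Fin.revPerm with hr
  have hmem : ∀ p ∈ grids n, (r * p.1, r * p.2) ∈ grids n := by
    intro p hp
    simp only [grids, Finset.mem_filter, Finset.mem_univ, true_and] at hp ⊢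
    intro i
    simpa [hr, Fin.rev_inj] using hp i
  have hsum : ∑ p ∈ grids n, tb p.1 p.2 = ∑ p ∈ grids n, tb (r * p.1) (r * p.2) := by
    refine Finset.sum_nbij' (fun p => (r * p.1, r * p.2)) (fun p => (r * p.1, r * p.2))
      hmem hmem ?_ ?_ ?_
    · intro p _; simp [hr, revPerm_mul_revPerm_mul]
    · intro p _; simp [hr, revPerm_mul_revPerm_mul]
    · intro p _; simp [hr, revPerm_mul_revPerm_mul]
  have key : ∀ p ∈ grids n, tb p.1 p.2 + tb (r * p.1) (r * p.2) = -(n : ℚ) := by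
    intro p hp
    simp only [grids, Finset.mem_filter, Finset.mem_univ, true_and] at hp
    have hw := writhe_rev p.1 p.2
    have hc := cusps_rev p.1 p.2 hp
    unfold tb
    rw [hw]
    have : (cusps (r * p.1) (r * p.2) : ℚ) + (cusps p.1 p.2 : ℚ) = 2 * n := by
      exact_mod_cast congrArg (Nat.cast : ℕ → ℚ) hc
    push_cast
    linarith
  have h2 : ∑ p ∈ grids n, (tb p.1 p.2 + tb (r * p.1) (r * p.2)) =
      ∑ _p ∈ grids n, (-(n : ℚ)) := Finset.sum_congr rfl key
  rw [Finset.sum_add_distrib, ← hsum, Finset.sum_const, nsmul_eq_mul] at h2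
  linarith
end

section
/- Let G = (σ, τ) be a grid diagram of size n, let r be a row with r+1 < n, and suppose the four columns σ(r), τ(r), σ(r+1), τ(r+1) are pairwise distinct. Let I = [min(σ(r), τ(r)), max(σ(r), τ(r))] and J = [min(σ(r+1), τ(r+1)), max(σ(r+1), τ(r+1))], and assume the commutation is non-interleaving, i.e. either I and J are disjoint, or one of I, J contains the other. Let G' = (σ∘t, τ∘t) with t the transposition (r, r+1) be the grid obtained by commuting rows r and r+1. Then w(G') = w(G): a non-interleaving row commutation preserves the writhe of the grid. -/
/-- Signed indicator: `sign(a - b)` if `c` lies strictly between `a` and `b`, else `0`. -/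
def hsgn {n : ℕ} (a b c : Fin n) : ℤ :=
  (if b < c ∧ c < a then 1 else 0) - (if a < c ∧ c < b then 1 else 0)

lemma if_and_mul {P Q : Prop} [Decidable P] [Decidable Q] (u v : ℤ) :
    (if P ∧ Q then u * v else 0) = (if P then u else 0) * (if Q then v else 0) := by
  by_cases hP : P <;> by_cases hQ : Q <;> simp [hP, hQ]

lemma hsgn_half {n : ℕ} (a b j : Fin n) :
    (if min a b < j ∧ j < max a b then Int.sign (((a:ℕ):ℤ) - ((b:ℕ):ℤ)) else 0)
      = hsgn a b j := by
  rcases lt_trichotomy a b with hab | hab | hab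
  · have hsg : Int.sign (((a:ℕ):ℤ) - ((b:ℕ):ℤ)) = -1 := by
      apply Int.sign_eq_neg_one_of_neg
      have := Fin.lt_def.mp hab; omega
    rw [hsg]
    simp only [hsgn, min_eq_left hab.le, max_eq_right hab.le, Fin.lt_def]
    have := Fin.lt_def.mp hab
    split_ifs <;> omega
  · subst hab
    have hc : ¬((a:ℕ) < (j:ℕ) ∧ (j:ℕ) < (a:ℕ)) := by omega
    simp only [hsgn, min_self, max_self, Fin.lt_def]
    split_ifs <;> omega
  · have hsg : Int.sign (((a:ℕ):ℤ) - ((b:ℕ):ℤ)) = 1 := by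
      apply Int.sign_eq_one_of_pos
      have := Fin.lt_def.mp hab; omega
    rw [hsg]
    simp only [hsgn, min_eq_right hab.le, max_eq_left hab.le, Fin.lt_def]
    have := Fin.lt_def.mp hab
    split_ifs <;> omega

lemma writhe_eq {n : ℕ} (σ τ : Equiv.Perm (Fin n)) :
    writhe σ τ = ∑ i : Fin n, ∑ k : Fin n,
      hsgn (σ i) (τ i) (σ k) * hsgn (τ⁻¹ (σ k)) k i := by
  rw [writhe, crossings, Finset.sum_filter, Fintype.sum_prod_type]
  have step : ∀ i : Fin n, (∑ j : Fin n,
      if min (σ i) (τ i) < j ∧ j < max (σ i) (τ i) ∧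
          min (σ⁻¹ j) (τ⁻¹ j) < i ∧ i < max (σ⁻¹ j) (τ⁻¹ j) then
        crossSign σ τ i j else 0)
      = ∑ j : Fin n, hsgn (σ i) (τ i) j * hsgn (τ⁻¹ j) (σ⁻¹ j) i := by
    intro i
    refine Finset.sum_congr rfl fun j _ => ?_
    rw [crossSign]
    have : ((((σ i : ℕ) : ℤ) - ((τ i : ℕ) : ℤ)) * (((τ⁻¹ j : ℕ) : ℤ) - ((σ⁻¹ j : ℕ) : ℤ))).sign
        = Int.sign (((σ i : ℕ):ℤ) - ((τ i : ℕ):ℤ)) * Int.sign (((τ⁻¹ j : ℕ):ℤ) - ((σ⁻¹ j : ℕ):ℤ)) :=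
      Int.sign_mul _ _
    rw [this]
    have hre : (min (σ i) (τ i) < j ∧ j < max (σ i) (τ i) ∧
          min (σ⁻¹ j) (τ⁻¹ j) < i ∧ i < max (σ⁻¹ j) (τ⁻¹ j)) ↔
        ((min (σ i) (τ i) < j ∧ j < max (σ i) (τ i)) ∧
          (min (σ⁻¹ j) (τ⁻¹ j) < i ∧ i < max (σ⁻¹ j) (τ⁻¹ j))) := by tauto
    rw [if_congr hre rfl rfl, if_and_mul, hsgn_half]
    congr 1
    rw [min_comm, max_comm, hsgn_half]
  refine Finset.sum_congr rfl fun i _ => ?_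
  rw [step i]
  rw [← Equiv.sum_comp σ (fun j => hsgn (σ i) (τ i) j * hsgn (τ⁻¹ j) (σ⁻¹ j) i)]
  refine Finset.sum_congr rfl fun k _ => ?_
  simp

lemma sum_reindex {n : ℕ} (e : Equiv.Perm (Fin n)) (H : Fin n → Fin n → ℤ) :
    ∑ i : Fin n, ∑ k : Fin n, H i k = ∑ i : Fin n, ∑ k : Fin n, H (e i) (e k) := by
  rw [← Equiv.sum_comp e (fun i => ∑ k : Fin n, H i k)]
  exact Finset.sum_congr rfl fun i _ => (Equiv.sum_comp e fun k => H (e i) k).symm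

set_option maxHeartbeats 1000000

lemma perm_apply_inv_self {α : Type*} (f : Equiv.Perm α) (x : α) : f (f⁻¹ x) = x :=
  f.apply_symm_apply x

lemma perm_inv_apply_self {α : Type*} (f : Equiv.Perm α) (x : α) : f⁻¹ (f x) = x :=
  f.symm_apply_apply x

lemma key0_nat (a b c d : ℕ) (hab : a ≠ b) (hac : a ≠ c) (had : a ≠ d)
    (hbc : b ≠ c) (hbd : b ≠ d) (hcd : c ≠ d)
    (hNI : (max a b < min c d ∨ max c d < min a b)
      ∨ (min c d ≤ min a b ∧ max a b ≤ max c d)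
      ∨ (min a b ≤ min c d ∧ max c d ≤ max a b)) :
    (((if b < c ∧ c < a then (1:ℤ) else 0) - (if a < c ∧ c < b then 1 else 0))
      - ((if d < a ∧ a < c then (1:ℤ) else 0) - (if c < a ∧ a < d then 1 else 0)))
      - ((if b < d ∧ d < a then (1:ℤ) else 0) - (if a < d ∧ d < b then 1 else 0))
      + ((if d < b ∧ b < c then (1:ℤ) else 0) - (if c < b ∧ b < d then 1 else 0)) = 0 := by
  split_ifs <;> omega

/-- Let `(σ, τ)` be a grid diagram of size `n` and let `s = r + 1` be the
row above row `r`. Assume the four columns `σ r, τ r, σ s, τ s` are pairwise distinct, and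
that the horizontal intervals `I = [min (σ r) (τ r), max (σ r) (τ r)]` and
`J = [min (σ s) (τ s), max (σ s) (τ s)]` are non-interleaving: `I` and `J` are disjoint, or
one contains the other. Then commuting rows `r` and `r+1` (passing to `(σ∘t, τ∘t)` with
`t = (r, r+1)`) preserves the writhe. -/
theorem noninterleaving_commutation_writhe (n : ℕ) (hn : 2 ≤ n) (σ τ : Equiv.Perm (Fin n))
    (h : ∀ i, σ i ≠ τ i) (r s : Fin n) (hs : (s : ℕ) = (r : ℕ) + 1)
    (hdist : ([σ r, τ r, σ s, τ s] : List (Fin n)).Pairwise (· ≠ ·))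
    (hni :
      Disjoint (Set.Icc (min (σ r) (τ r)) (max (σ r) (τ r)))
          (Set.Icc (min (σ s) (τ s)) (max (σ s) (τ s))) ∨
      Set.Icc (min (σ r) (τ r)) (max (σ r) (τ r)) ⊆
          Set.Icc (min (σ s) (τ s)) (max (σ s) (τ s)) ∨
      Set.Icc (min (σ s) (τ s)) (max (σ s) (τ s)) ⊆
          Set.Icc (min (σ r) (τ r)) (max (σ r) (τ r))) :
    writhe (σ * Equiv.swap r s) (τ * Equiv.swap r s) = writhe σ τ := by
  classical
  set t : Equiv.Perm (Fin n) := Equiv.swap r s with ht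
  -- distinctness facts
  simp only [List.pairwise_cons, List.mem_cons, List.not_mem_nil, List.mem_singleton,
    List.Pairwise.nil, forall_eq_or_imp, forall_eq] at hdist
  obtain ⟨⟨hab, hac, had, -⟩, ⟨hbc, hbd, -⟩, ⟨hcd, -⟩, -⟩ := hdist
  have hrs : r ≠ s := by
    intro e; rw [e] at hs; omega
  have hrlts : r < s := Fin.lt_def.mpr (by omega)
  have tr : t r = s := Equiv.swap_apply_left r s
  have tsr : t s = r := Equiv.swap_apply_right r s
  have tother : ∀ x : Fin n, x ≠ r → x ≠ s → t x = x :=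
    fun x h1 h2 => Equiv.swap_apply_of_ne_of_ne h1 h2
  have tt : ∀ x : Fin n, t (t x) = x := fun x => Equiv.swap_apply_self r s x
  have tval : ∀ x : Fin n, ((t x : Fin n) : ℕ)
      = if (x:ℕ) = (r:ℕ) then (s:ℕ) else if (x:ℕ) = (s:ℕ) then (r:ℕ) else (x:ℕ) := by
    intro x
    by_cases h1 : x = r
    · subst h1; simp [tr]
    · by_cases h2 : x = s
      · subst h2
        have : (x:ℕ) ≠ (r:ℕ) := fun e => h1 (Fin.ext e)
        simp [tsr, this]
      · have e1 : (x:ℕ) ≠ (r:ℕ) := fun e => h1 (Fin.ext e)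
        have e2 : (x:ℕ) ≠ (s:ℕ) := fun e => h2 (Fin.ext e)
        simp [tother x h1 h2, e1, e2]
  have swap_lt : ∀ x y : Fin n, ¬(x = r ∧ y = s) → ¬(x = s ∧ y = r) → (t x < t y ↔ x < y) := by
    intro x y h1 h2
    simp only [Fin.ext_iff] at h1 h2
    simp only [Fin.lt_def, tval]
    split_ifs <;> omega
  -- the two double sums
  rw [writhe_eq, writhe_eq]
  have hinv : ∀ k : Fin n, (τ * t)⁻¹ ((σ * t) k) = t (τ⁻¹ (σ (t k))) := by
    intro k
    simp [mul_inv_rev, Equiv.Perm.mul_apply, Equiv.swap_inv, ht]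
  have lhs_eq : (∑ i : Fin n, ∑ k : Fin n,
        hsgn ((σ * t) i) ((τ * t) i) ((σ * t) k) * hsgn ((τ * t)⁻¹ ((σ * t) k)) k i)
      = ∑ i : Fin n, ∑ k : Fin n,
        hsgn (σ i) (τ i) (σ k) * hsgn (t (τ⁻¹ (σ k))) (t k) (t i) := by
    have e1 : (∑ i : Fin n, ∑ k : Fin n,
        hsgn ((σ * t) i) ((τ * t) i) ((σ * t) k) * hsgn ((τ * t)⁻¹ ((σ * t) k)) k i)
        = ∑ i : Fin n, ∑ k : Fin n,
        hsgn (σ (t i)) (τ (t i)) (σ (t k)) * hsgn (t (τ⁻¹ (σ (t k)))) k i := by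
      refine Finset.sum_congr rfl fun i _ => Finset.sum_congr rfl fun k _ => ?_
      rw [hinv k]; rfl
    rw [e1, sum_reindex t (fun i k => hsgn (σ (t i)) (τ (t i)) (σ (t k)) * hsgn (t (τ⁻¹ (σ (t k)))) k i)]
    refine Finset.sum_congr rfl fun i _ => Finset.sum_congr rfl fun k _ => ?_
    rw [tt, tt]
  rw [lhs_eq]
  -- now show the difference of double sums is zero
  rw [← sub_eq_zero, ← Finset.sum_sub_distrib]
  have sum_inner : ∀ i : Fin n, ((∑ k : Fin n, hsgn (σ i) (τ i) (σ k) * hsgn (t (τ⁻¹ (σ k))) (t k) (t i))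
      - ∑ k : Fin n, hsgn (σ i) (τ i) (σ k) * hsgn (τ⁻¹ (σ k)) k i)
      = ∑ k : Fin n, (hsgn (σ i) (τ i) (σ k) * hsgn (t (τ⁻¹ (σ k))) (t k) (t i)
          - hsgn (σ i) (τ i) (σ k) * hsgn (τ⁻¹ (σ k)) k i) := by
    intro i; rw [Finset.sum_sub_distrib]
  calc (∑ i : Fin n, ((∑ k : Fin n, hsgn (σ i) (τ i) (σ k) * hsgn (t (τ⁻¹ (σ k))) (t k) (t i))
          - ∑ k : Fin n, hsgn (σ i) (τ i) (σ k) * hsgn (τ⁻¹ (σ k)) k i))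
      = ∑ p : Fin n × Fin n, (hsgn (σ p.1) (τ p.1) (σ p.2) * hsgn (t (τ⁻¹ (σ p.2))) (t p.2) (t p.1)
          - hsgn (σ p.1) (τ p.1) (σ p.2) * hsgn (τ⁻¹ (σ p.2)) p.2 p.1) := by
        rw [Fintype.sum_prod_type]
        exact Finset.sum_congr rfl fun i _ => sum_inner i
    _ = 0 := by
        set k3 : Fin n := σ⁻¹ (τ s) with hk3
        set k4 : Fin n := σ⁻¹ (τ r) with hk4
        have hσk3 : σ k3 = τ s := perm_apply_inv_self σ (τ s)
        have hσk4 : σ k4 = τ r := perm_apply_inv_self σ (τ r)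
        have hk3r : k3 ≠ r := fun e => had (by rw [← hσk3, e])
        have hk3s : k3 ≠ s := fun e => hcd (by rw [← hσk3, e])
        have hk4r : k4 ≠ r := fun e => hab (by rw [← hσk4, e])
        have hk4s : k4 ≠ s := fun e => hbc (by rw [← hσk4, e])
        -- auxiliary: recover k from the value of b = τ⁻¹ (σ k)
        have breq : ∀ k : Fin n, τ⁻¹ (σ k) = r → k = k4 := by
          intro k hb
          have : σ k = τ r := by
            conv_lhs => rw [← perm_apply_inv_self τ (σ k), hb]
          rw [hk4, ← this, perm_inv_apply_self]
        have bseq : ∀ k : Fin n, τ⁻¹ (σ k) = s → k = k3 := by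
          intro k hb
          have : σ k = τ s := by
            conv_lhs => rw [← perm_apply_inv_self τ (σ k), hb]
          rw [hk3, ← this, perm_inv_apply_self]
        have Dzero : ∀ p : Fin n × Fin n, p ≠ (r, s) → p ≠ (s, r) → p ≠ (r, k3) → p ≠ (s, k4) →
            hsgn (t (τ⁻¹ (σ p.2))) (t p.2) (t p.1) = hsgn (τ⁻¹ (σ p.2)) p.2 p.1 := by
          rintro ⟨i, k⟩ h1 h2 h3 h4
          have e1 : t k < t i ↔ k < i :=
            swap_lt k i (by rintro ⟨u, v⟩; exact h2 (by rw [u, v]))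
              (by rintro ⟨u, v⟩; exact h1 (by rw [u, v]))
          have e4 : t i < t k ↔ i < k :=
            swap_lt i k (by rintro ⟨u, v⟩; exact h1 (by rw [u, v]))
              (by rintro ⟨u, v⟩; exact h2 (by rw [u, v]))
          have e2 : t i < t (τ⁻¹ (σ k)) ↔ i < τ⁻¹ (σ k) :=
            swap_lt i (τ⁻¹ (σ k))
              (by rintro ⟨u, v⟩; exact h3 (by rw [u, bseq k v]))
              (by rintro ⟨u, v⟩; exact h4 (by rw [u, breq k v]))
          have e3 : t (τ⁻¹ (σ k)) < t i ↔ τ⁻¹ (σ k) < i :=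
            swap_lt (τ⁻¹ (σ k)) i
              (by rintro ⟨u, v⟩; exact h4 (by rw [v, breq k u]))
              (by rintro ⟨u, v⟩; exact h3 (by rw [v, bseq k u]))
          simp only [hsgn, e1, e2, e3, e4]
        -- restrict the sum to the four special pairs
        have hSsub : ({(r, s), (s, r), (r, k3), (s, k4)} : Finset (Fin n × Fin n)) ⊆ Finset.univ :=
          Finset.subset_univ _
        rw [← Finset.sum_subset hSsub (by
          intro p _ hp
          simp only [Finset.mem_insert, Finset.mem_singleton, not_or] at hp
          obtain ⟨h1, h2, h3, h4⟩ := hp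
          rw [Dzero p h1 h2 h3 h4, sub_self])]
        -- evaluate the sum over the four pairs
        have d1 : ((r, s) : Fin n × Fin n) ∉ ({(s, r), (r, k3), (s, k4)} : Finset (Fin n × Fin n)) := by
          simp only [Finset.mem_insert, Finset.mem_singleton, Prod.mk.injEq, not_or]
          exact ⟨fun ⟨u, v⟩ => hrs u, fun ⟨u, v⟩ => hk3s v.symm, fun ⟨u, v⟩ => hrs u⟩
        have d2 : ((s, r) : Fin n × Fin n) ∉ ({(r, k3), (s, k4)} : Finset (Fin n × Fin n)) := by
          simp only [Finset.mem_insert, Finset.mem_singleton, Prod.mk.injEq, not_or]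
          exact ⟨fun ⟨u, v⟩ => hrs u.symm, fun ⟨u, v⟩ => hk4r v.symm⟩
        have d3 : ((r, k3) : Fin n × Fin n) ∉ ({(s, k4)} : Finset (Fin n × Fin n)) := by
          simp only [Finset.mem_singleton, Prod.mk.injEq, not_and]
          exact fun u => absurd u hrs
        rw [Finset.sum_insert d1, Finset.sum_insert d2, Finset.sum_insert d3, Finset.sum_singleton]
        dsimp only
        -- values of t at relevant points
        have hb1 : τ⁻¹ (σ s) ≠ r := fun e => hbc (by
          have := congrArg τ e
          rw [perm_apply_inv_self] at this
          exact this.symm)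
        have hb1s : τ⁻¹ (σ s) ≠ s := fun e => hcd (by
          have := congrArg τ e
          rw [perm_apply_inv_self] at this
          exact this)
        have hb2 : τ⁻¹ (σ r) ≠ r := fun e => hab (by
          have := congrArg τ e
          rw [perm_apply_inv_self] at this
          exact this)
        have hb2s : τ⁻¹ (σ r) ≠ s := fun e => had (by
          have := congrArg τ e
          rw [perm_apply_inv_self] at this
          exact this)
        rw [tr, tsr, tother _ hb1 hb1s, tother _ hb2 hb2s, tother _ hk3r hk3s, tother _ hk4r hk4s]
        rw [show τ⁻¹ (σ k3) = s by rw [hσk3, perm_inv_apply_self]]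
        rw [show τ⁻¹ (σ k4) = r by rw [hσk4, perm_inv_apply_self]]
        rw [tr, tsr, hσk3, hσk4]
        -- numeric facts
        have nb1r : ((τ⁻¹ (σ s) : Fin n) : ℕ) ≠ (r : ℕ) := fun e => hb1 (Fin.ext e)
        have nb1s : ((τ⁻¹ (σ s) : Fin n) : ℕ) ≠ (s : ℕ) := fun e => hb1s (Fin.ext e)
        have nb2r : ((τ⁻¹ (σ r) : Fin n) : ℕ) ≠ (r : ℕ) := fun e => hb2 (Fin.ext e)
        have nb2s : ((τ⁻¹ (σ r) : Fin n) : ℕ) ≠ (s : ℕ) := fun e => hb2s (Fin.ext e)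
        have nk3r : ((k3 : Fin n) : ℕ) ≠ (r : ℕ) := fun e => hk3r (Fin.ext e)
        have nk3s : ((k3 : Fin n) : ℕ) ≠ (s : ℕ) := fun e => hk3s (Fin.ext e)
        have nk4r : ((k4 : Fin n) : ℕ) ≠ (r : ℕ) := fun e => hk4r (Fin.ext e)
        have nk4s : ((k4 : Fin n) : ℕ) ≠ (s : ℕ) := fun e => hk4s (Fin.ext e)
        have c1 : hsgn (τ⁻¹ (σ s)) r s - hsgn (τ⁻¹ (σ s)) s r = 1 := by
          simp only [hsgn, Fin.lt_def]; split_ifs <;> omega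
        have c2 : hsgn (τ⁻¹ (σ r)) s r - hsgn (τ⁻¹ (σ r)) r s = -1 := by
          simp only [hsgn, Fin.lt_def]; split_ifs <;> omega
        have c3 : hsgn r k3 s - hsgn s k3 r = -1 := by
          simp only [hsgn, Fin.lt_def]; split_ifs <;> omega
        have c4 : hsgn s k4 r - hsgn r k4 s = 1 := by
          simp only [hsgn, Fin.lt_def]; split_ifs <;> omega
        -- final arithmetic from non-interleaving
        have nab : ((σ r : Fin n) : ℕ) ≠ (τ r : ℕ) := fun e => hab (Fin.ext e)
        have nac : ((σ r : Fin n) : ℕ) ≠ (σ s : ℕ) := fun e => hac (Fin.ext e)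
        have nad : ((σ r : Fin n) : ℕ) ≠ (τ s : ℕ) := fun e => had (Fin.ext e)
        have nbc : ((τ r : Fin n) : ℕ) ≠ (σ s : ℕ) := fun e => hbc (Fin.ext e)
        have nbd : ((τ r : Fin n) : ℕ) ≠ (τ s : ℕ) := fun e => hbd (Fin.ext e)
        have ncd : ((σ s : Fin n) : ℕ) ≠ (τ s : ℕ) := fun e => hcd (Fin.ext e)
        have vmax : ∀ x y : Fin n, ((max x y : Fin n) : ℕ) = max (x : ℕ) (y : ℕ) := fun _ _ => rfl
        have vmin : ∀ x y : Fin n, ((min x y : Fin n) : ℕ) = min (x : ℕ) (y : ℕ) := fun _ _ => rfl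
        have hNI : (max (σ r : ℕ) (τ r : ℕ) < min (σ s : ℕ) (τ s : ℕ)
              ∨ max (σ s : ℕ) (τ s : ℕ) < min (σ r : ℕ) (τ r : ℕ))
            ∨ (min (σ s : ℕ) (τ s : ℕ) ≤ min (σ r : ℕ) (τ r : ℕ)
                ∧ max (σ r : ℕ) (τ r : ℕ) ≤ max (σ s : ℕ) (τ s : ℕ))
            ∨ (min (σ r : ℕ) (τ r : ℕ) ≤ min (σ s : ℕ) (τ s : ℕ)
                ∧ max (σ s : ℕ) (τ s : ℕ) ≤ max (σ r : ℕ) (τ r : ℕ)) := by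
          rcases hni with hd | hsub | hsub
          · left
            by_contra hc
            push_neg at hc
            obtain ⟨h1, h2⟩ := hc
            have h1' : min (σ s) (τ s) ≤ max (σ r) (τ r) := by
              rw [Fin.le_def, vmax, vmin]; omega
            have h2' : min (σ r) (τ r) ≤ max (σ s) (τ s) := by
              rw [Fin.le_def, vmax, vmin]; omega
            exact Set.disjoint_left.mp hd
              (Set.mem_Icc.mpr ⟨le_max_left _ _, max_le min_le_max h1'⟩)
              (Set.mem_Icc.mpr ⟨le_max_right _ _, max_le h2' min_le_max⟩)
          · right; left
            have m1 := Set.mem_Icc.mp (hsub (Set.mem_Icc.mpr ⟨le_refl _, min_le_max⟩))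
            have m2 := Set.mem_Icc.mp (hsub (Set.mem_Icc.mpr ⟨min_le_max, le_refl _⟩))
            rw [Fin.le_def, Fin.le_def, vmax, vmin] at m1 m2
            constructor
            · exact m1.1
            · exact m2.2
          · right; right
            have m1 := Set.mem_Icc.mp (hsub (Set.mem_Icc.mpr ⟨le_refl _, min_le_max⟩))
            have m2 := Set.mem_Icc.mp (hsub (Set.mem_Icc.mpr ⟨min_le_max, le_refl _⟩))
            rw [Fin.le_def, Fin.le_def, vmax, vmin] at m1 m2
            constructor
            · exact m1.1
            · exact m2.2
        have key0 : hsgn (σ r) (τ r) (σ s) - hsgn (σ s) (τ s) (σ r)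
              - hsgn (σ r) (τ r) (τ s) + hsgn (σ s) (τ s) (τ r) = 0 := by
          simp only [hsgn, Fin.lt_def]
          exact key0_nat _ _ _ _ nab nac nad nbc nbd ncd hNI
        linear_combination hsgn (σ r) (τ r) (σ s) * c1 + hsgn (σ s) (τ s) (σ r) * c2
          + hsgn (σ r) (τ r) (τ s) * c3 + hsgn (σ s) (τ s) (τ r) * c4 + key0
end
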